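/- Let b₀, b₁, …, b_n be distinct nonzero real numbers. Then there exists a constant C₁ > 0, depending only on b₀, b₁, …, b_n, such that for all real parameters μ₁, …, μ_n and every t > 0, the function φ(t) = t^{b₀} + μ₁ t^{b₁} + ⋯ + μ_n t^{b_n} satisfies |φ^{(k)}(t)| ≥ C₁ · t^{b₀ − k} for at least one k ∈ {1, …, n+1}. -/

import Mathlib

open MeasureTheory Real Filter Polynomial
open scoped Topology ENNReal

private lemma iterDeriv_rpow_sum {m : ℕ} (b : Fin m → ℝ) (a : Fin m → ℝ) (k : ℕ) :
    ∀ t : ℝ, 0 < t →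
      iteratedDeriv k (fun s : ℝ => ∑ i, a i * s ^ (b i)) t =
        ∑ i, a i * (∏ j ∈ Finset.range k, (b i - j)) * t ^ (b i - k) := by
  induction k with
  | zero =>
      intro t ht
      simp
  | succ k ih =>
      intro t ht
      rw [iteratedDeriv_succ]
      have hev : iteratedDeriv k (fun s : ℝ => ∑ i, a i * s ^ (b i)) =ᶠ[𝓝 t]
          fun s => ∑ i, a i * (∏ j ∈ Finset.range k, (b i - j)) * s ^ (b i - k) := by
        filter_upwards [isOpen_Ioi.mem_nhds ht] with s hs
        exact ih s hs
      rw [hev.deriv_eq]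
      have hd : HasDerivAt
          (fun s : ℝ => ∑ i, a i * (∏ j ∈ Finset.range k, (b i - j)) * s ^ (b i - k))
          (∑ i, a i * (∏ j ∈ Finset.range k, (b i - j)) * ((b i - k) * t ^ (b i - k - 1))) t := by
        apply HasDerivAt.fun_sum
        intro i _
        exact (Real.hasDerivAt_rpow_const (Or.inl ht.ne')).const_mul _
      rw [hd.deriv]
      refine Finset.sum_congr rfl fun i _ => ?_
      rw [Finset.prod_range_succ]
      have he : b i - (k : ℝ) - 1 = b i - ((k + 1 : ℕ) : ℝ) := by push_cast; ring
      rw [he]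
      push_cast
      ring

private lemma det_ne_aux (n : ℕ) (b : Fin (n + 1) → ℝ)
    (hb_inj : Function.Injective b) (hb_ne : ∀ i, b i ≠ 0) :
    (Matrix.of fun (k i : Fin (n + 1)) => ∏ j ∈ Finset.range ((k : ℕ) + 1), (b i - j)).det ≠ 0 := by
  set p : Fin (n + 1) → ℝ[X] := fun k => ∏ j ∈ Finset.range (k : ℕ), (X - C ((j : ℝ) + 1)) with hp
  have hmonic : ∀ k, (p k).Monic := fun k => monic_prod_of_monic _ _ (fun j _ => monic_X_sub_C _)
  have hdeg : ∀ k : Fin (n + 1), (p k).natDegree = (k : ℕ) := by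
    intro k
    rw [hp]
    rw [natDegree_prod _ _ (fun j _ => X_sub_C_ne_zero _)]
    have h1 : ∀ j ∈ Finset.range (k : ℕ), ((X : ℝ[X]) - C ((j : ℝ) + 1)).natDegree = 1 :=
      fun j _ => natDegree_X_sub_C ((j : ℝ) + 1)
    rw [Finset.sum_congr rfl h1, Finset.sum_const, smul_eq_mul, mul_one, Finset.card_range]
  have hfac : (Matrix.of fun (k i : Fin (n + 1)) => ∏ j ∈ Finset.range ((k : ℕ) + 1), (b i - j))
      = Matrix.transpose (Matrix.of fun (i k : Fin (n + 1)) => (p k).eval (b i)) *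
        Matrix.diagonal b := by
    ext k i
    rw [Matrix.mul_diagonal]
    simp only [Matrix.transpose_apply, Matrix.of_apply]
    rw [Finset.prod_range_succ' (fun j => b i - (j : ℝ))]
    simp only [hp, eval_prod, eval_sub, eval_X, eval_C]
    rw [Nat.cast_zero, sub_zero]
    congr 1
    exact Finset.prod_congr rfl fun j _ => by push_cast; ring
  rw [hfac, Matrix.det_mul, Matrix.det_transpose, Matrix.det_diagonal]
  have hv : (Matrix.vandermonde b).det =
      (Matrix.of fun (i k : Fin (n + 1)) => (p k).eval (b i)).det :=
    Matrix.det_eval_matrixOfPolynomials_eq_det_vandermonde b p hdeg hmonic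
  rw [← hv]
  refine mul_ne_zero (Matrix.det_vandermonde_ne_zero_iff.mpr hb_inj) ?_
  exact Finset.prod_ne_zero_iff.mpr fun i _ => hb_ne i

/-- For a phase `φ(t) = t^{b₀} + μ₁ t^{b₁} + ⋯ + μ_n t^{b_n}` with distinct nonzero
real exponents, some derivative `φ^{(k)}`, `1 ≤ k ≤ n+1`, satisfies the lower bound
`|φ^{(k)}(t)| ≥ C₁ t^{b₀ - k}`, uniformly in the parameters `μ` and in `t > 0`. -/
theorem derivative_lower_bound
    (n : ℕ) (b : Fin (n + 1) → ℝ)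
    (hb_inj : Function.Injective b) (hb_ne : ∀ i, b i ≠ 0) :
    ∃ C₁ : ℝ, 0 < C₁ ∧
      ∀ (μ : Fin n → ℝ) (t : ℝ), 0 < t →
        ∃ k : ℕ, 1 ≤ k ∧ k ≤ n + 1 ∧
          C₁ * t ^ (b 0 - k) ≤
            |iteratedDeriv k
              (fun s : ℝ => s ^ (b 0) + ∑ i : Fin n, μ i * s ^ (b i.succ)) t| := by
  set M : Matrix (Fin (n + 1)) (Fin (n + 1)) ℝ :=
    Matrix.of fun k i => ∏ j ∈ Finset.range ((k : ℕ) + 1), (b i - j) with hM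
  have hdet : M.det ≠ 0 := det_ne_aux n b hb_inj hb_ne
  have hinv : M⁻¹ * M = 1 := Matrix.nonsing_inv_mul M (Ne.isUnit hdet)
  set A : ℝ := ∑ k, |M⁻¹ 0 k| with hA
  have hA0 : 0 < A := by
    rcases (Finset.sum_nonneg fun k _ => abs_nonneg (M⁻¹ 0 k)).lt_or_eq with h | h
    · exact h
    · exfalso
      have hz : ∀ k, M⁻¹ 0 k = 0 := by
        intro k
        have := (Finset.sum_eq_zero_iff_of_nonneg
          (fun k _ => abs_nonneg (M⁻¹ 0 k))).mp h.symm k (Finset.mem_univ k)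
        exact abs_eq_zero.mp this
      have h1 : (M⁻¹ * M) 0 0 = 1 := by rw [hinv]; simp
      rw [Matrix.mul_apply] at h1
      simp [hz] at h1
  refine ⟨A⁻¹, inv_pos.mpr hA0, ?_⟩
  intro μ t ht
  set a : Fin (n + 1) → ℝ := Fin.cons 1 μ with ha
  have hφ : (fun s : ℝ => s ^ (b 0) + ∑ i : Fin n, μ i * s ^ (b i.succ)) =
      fun s : ℝ => ∑ i : Fin (n + 1), a i * s ^ (b i) := by
    funext s
    rw [Fin.sum_univ_succ]
    simp [ha]
  set w : Fin (n + 1) → ℝ := fun i => a i * t ^ (b i - b 0) with hw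
  set v : Fin (n + 1) → ℝ := M.mulVec w with hv
  have hw0 : w 0 = 1 := by simp [hw, ha]
  have h1 : (1 : ℝ) = ∑ k, M⁻¹ 0 k * v k := by
    have : M⁻¹.mulVec v = w := by
      rw [hv, Matrix.mulVec_mulVec, hinv, Matrix.one_mulVec]
    have h0 := congrFun this 0
    rw [hw0] at h0
    rw [← h0, Matrix.mulVec, dotProduct]
  obtain ⟨k₀, hk₀⟩ := Finite.exists_max fun k : Fin (n + 1) => |v k|
  have h2 : 1 ≤ A * |v k₀| := by
    calc (1 : ℝ) = |∑ k, M⁻¹ 0 k * v k| := by rw [← h1]; simp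
    _ ≤ ∑ k, |M⁻¹ 0 k * v k| := Finset.abs_sum_le_sum_abs _ _
    _ = ∑ k, |M⁻¹ 0 k| * |v k| := by simp [abs_mul]
    _ ≤ ∑ k, |M⁻¹ 0 k| * |v k₀| :=
        Finset.sum_le_sum fun k _ => mul_le_mul_of_nonneg_left (hk₀ k) (abs_nonneg _)
    _ = A * |v k₀| := by rw [hA, Finset.sum_mul]
  have h3 : A⁻¹ ≤ |v k₀| := by
    rw [mul_comm] at h2
    rw [inv_eq_one_div, div_le_iff₀ hA0]
    exact h2
  refine ⟨(k₀ : ℕ) + 1, Nat.le_add_left 1 _, by have := k₀.isLt; omega, ?_⟩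
  have hderiv : iteratedDeriv ((k₀ : ℕ) + 1)
      (fun s : ℝ => s ^ (b 0) + ∑ i : Fin n, μ i * s ^ (b i.succ)) t
      = v k₀ * t ^ (b 0 - (((k₀ : ℕ) + 1 : ℕ) : ℝ)) := by
    rw [hφ, iterDeriv_rpow_sum b a ((k₀ : ℕ) + 1) t ht]
    rw [hv, Matrix.mulVec, dotProduct, Finset.sum_mul]
    refine Finset.sum_congr rfl fun i _ => ?_
    simp only [hM, Matrix.of_apply, hw]
    have h4 : t ^ (b i - b 0) * t ^ (b 0 - (((k₀ : ℕ) + 1 : ℕ) : ℝ))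
        = t ^ (b i - (((k₀ : ℕ) + 1 : ℕ) : ℝ)) := by
      rw [← Real.rpow_add ht]
      congr 1
      ring
    rw [← h4]
    ring
  rw [hderiv, abs_mul, abs_of_pos (Real.rpow_pos_of_pos ht _)]
  exact mul_le_mul_of_nonneg_right h3 (Real.rpow_pos_of_pos ht _).le
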